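/- Let a, b : ℕ → Bool be bit sequences. For i ≤ j define the propagate bit p_{j,i} = ⋀_{l=i}^{j} (a_l ⊕ b_l) and the generate bit g_{j,i} = decide((∑_{l=i}^{j} a_l.toNat · 2^{l-i}) + (∑_{l=i}^{j} b_l.toNat · 2^{l-i}) ≥ 2^{j-i+1}). Then for all i ≤ k < j, the generation composition rule holds: g_{j,i} = g_{j,k+1} ∨ (g_{k,i} ∧ p_{j,k+1}). In particular the right-hand side is independent of the choice of the splitting index k. -/

import Mathlib

/-- The propagate bit `p_{j,i} = ⋀_{l=i}^{j} (a_l ⊕ b_l)` of the block of bit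
positions `i` through `j`: it expresses that a carry entering the block is
propagated through the entire block. -/
def propagate (a b : ℕ → Bool) (i j : ℕ) : Bool :=
  decide (∀ l ∈ Finset.Icc i j, xor (a l) (b l) = true)

/-- The generate bit
`g_{j,i} = decide((∑_{l=i}^{j} a_l·2^{l-i}) + (∑_{l=i}^{j} b_l·2^{l-i}) ≥ 2^{j-i+1})`
of the block of bit positions `i` through `j`: it expresses that the block
generates a carry-out even with carry-in `0`. -/
def generate (a b : ℕ → Bool) (i j : ℕ) : Bool :=
  decide (2 ^ (j - i + 1) ≤
    (∑ l ∈ Finset.Icc i j, (a l).toNat * 2 ^ (l - i)) +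
      (∑ l ∈ Finset.Icc i j, (b l).toNat * 2 ^ (l - i)))

/-- The value of a base-2 digit string `c` of length `n`. -/
private def Tval (c : ℕ → ℕ) (n : ℕ) : ℕ := ∑ m ∈ Finset.range n, c m * 2 ^ m

private lemma Tval_succ (c : ℕ → ℕ) (n : ℕ) :
    Tval c (n + 1) = Tval c n + c n * 2 ^ n := Finset.sum_range_succ _ n

private lemma Tval_le (c : ℕ → ℕ) (hc : ∀ m, c m ≤ 2) (n : ℕ) :
    Tval c n + 2 ≤ 2 ^ (n + 1) := by
  induction n with
  | zero => simp [Tval]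
  | succ n ih =>
    have h1 := Tval_succ c n
    have h2 : c n * 2 ^ n ≤ 2 * 2 ^ n := Nat.mul_le_mul_right _ (hc n)
    have h3 : 2 ^ (n + 1) = 2 * 2 ^ n := by ring
    have h4 : 2 ^ (n + 2) = 2 * 2 ^ (n + 1) := by ring
    omega

private lemma Tval_max (c : ℕ → ℕ) (hc : ∀ m, c m ≤ 2) :
    ∀ n, Tval c n + 1 = 2 ^ n ↔ ∀ m < n, c m = 1 := by
  intro n
  induction n with
  | zero => simp [Tval]
  | succ n ih =>
    have h1 := Tval_succ c n
    have hb := Tval_le c hc n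
    have h3 : 2 ^ (n + 1) = 2 * 2 ^ n := by ring
    have hpos : 0 < 2 ^ n := Nat.pow_pos (by norm_num)
    constructor
    · intro h
      have hcn : c n = 1 := by
        have := hc n
        interval_cases h' : c n <;> simp_all <;> omega
      have : Tval c n + 1 = 2 ^ n := by rw [hcn] at h1; omega
      intro m hm
      rcases Nat.lt_succ_iff_lt_or_eq.mp hm with hm | hm
      · exact (ih.mp this) m hm
      · simpa [hm] using hcn
    · intro h
      have hcn : c n = 1 := h n (Nat.lt_succ_self n)
      have : Tval c n + 1 = 2 ^ n := ih.mpr (fun m hm => h m (hm.trans (Nat.lt_succ_self n)))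
      rw [hcn] at h1; omega

private lemma Tval_split (c : ℕ → ℕ) (p q : ℕ) :
    Tval c (p + q) = Tval c p + 2 ^ p * Tval (fun t => c (p + t)) q := by
  rw [Tval, Finset.sum_range_add]
  congr 1
  rw [Tval, Finset.mul_sum]
  apply Finset.sum_congr rfl
  intro t _
  rw [pow_add]
  ring

private lemma Tval_add (c₁ c₂ : ℕ → ℕ) (n : ℕ) :
    Tval (fun t => c₁ t + c₂ t) n = Tval c₁ n + Tval c₂ n := by
  simp only [Tval, add_mul, Finset.sum_add_distrib]

private lemma sum_Icc_shift (f : ℕ → ℕ) (i j : ℕ) :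
    ∑ l ∈ Finset.Icc i j, f (l - i) = ∑ t ∈ Finset.range (j + 1 - i), f t := by
  rw [show Finset.Icc i j = Finset.map ⟨fun t => i + t, add_right_injective i⟩
      (Finset.range (j + 1 - i)) by
    ext l
    simp only [Finset.mem_Icc, Finset.mem_map, Finset.mem_range, Function.Embedding.coeFn_mk]
    constructor
    · intro ⟨h1, h2⟩; exact ⟨l - i, by omega, by omega⟩
    · rintro ⟨t, ht, rfl⟩; omega]
  rw [Finset.sum_map]
  apply Finset.sum_congr rfl
  intro t _
  simp

private lemma gen_sum (a : ℕ → Bool) (i j : ℕ) :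
    (∑ l ∈ Finset.Icc i j, (a l).toNat * 2 ^ (l - i)) =
      Tval (fun t => (a (i + t)).toNat) (j + 1 - i) := by
  rw [Tval, ← sum_Icc_shift (fun t => (a (i + t)).toNat * 2 ^ t) i j]
  apply Finset.sum_congr rfl
  intro l hl
  simp only [Finset.mem_Icc] at hl
  rw [show i + (l - i) = l by omega]

private lemma key_arith (M N L H : ℕ) (_hM : 0 < M) (hL : L + 2 ≤ 2 * M)
    (_hH : H + 2 ≤ 2 * N) :
    M * N ≤ L + M * H ↔ N ≤ H ∨ (M ≤ L ∧ H + 1 = N) := by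
  constructor
  · intro h
    by_contra hc
    push_neg at hc
    obtain ⟨h1, h2⟩ := hc
    rcases Nat.lt_or_ge (H + 1) N with h3 | h3
    · -- H + 2 ≤ N
      have : M * (H + 2) ≤ M * N := Nat.mul_le_mul_left M (by omega)
      have he : M * (H + 2) = M * H + 2 * M := by ring
      omega
    · have hN : H + 1 = N := by omega
      have hL' : L < M := by
        by_contra hL''
        exact absurd hN (h2 (by omega))
      have : M * N = M * H + M := by rw [← hN]; ring
      omega
  · rintro (h | ⟨h1, h2⟩)
    · have : M * N ≤ M * H := Nat.mul_le_mul_left M h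
      omega
    · have : M * N = M * H + M := by rw [← h2]; ring
      omega

/-- **Generation composition rule.** For all `i ≤ k < j`:
`g_{j,i} = g_{j,k+1} ∨ (g_{k,i} ∧ p_{j,k+1})`; in particular the right-hand
side is independent of the choice of the splitting index `k`. -/
theorem generate_comp (a b : ℕ → Bool) (i k j : ℕ) (hik : i ≤ k) (hkj : k < j) :
    generate a b i j = (generate a b (k + 1) j || (generate a b i k && propagate a b (k + 1) j)) := by
  set c : ℕ → ℕ := fun t => (a (i + t)).toNat + (b (i + t)).toNat with hc
  have hcle : ∀ t, c t ≤ 2 := by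
    intro t; simp only [hc]
    cases a (i + t) <;> cases b (i + t) <;> simp
  set m := k + 1 - i with hm
  set n := j - k with hn
  have hmpos : 0 < m := by omega
  have hnpos : 0 < n := by omega
  have e1 : j + 1 - i = m + n := by omega
  have e2 : j - i + 1 = m + n := by omega
  have e3 : k - i + 1 = m := by omega
  have e4 : k + 1 - i = m := by omega
  have e5 : j - (k + 1) + 1 = n := by omega
  have e6 : j + 1 - (k + 1) = n := by omega
  have eim : i + m = k + 1 := by omega
  -- the shifted high digits
  set c' : ℕ → ℕ := fun t => (a (k + 1 + t)).toNat + (b (k + 1 + t)).toNat with hc'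
  have hc'le : ∀ t, c' t ≤ 2 := by
    intro t; simp only [hc']
    cases a (k + 1 + t) <;> cases b (k + 1 + t) <;> simp
  have hshift : (fun t => c (m + t)) = c' := by
    funext t
    simp only [hc, hc', ← eim, Nat.add_assoc]
  -- sums in Tval form
  have sa : (∑ l ∈ Finset.Icc i j, (a l).toNat * 2 ^ (l - i)) =
      Tval (fun t => (a (i + t)).toNat) (m + n) := by rw [gen_sum, e1]
  have sb : (∑ l ∈ Finset.Icc i j, (b l).toNat * 2 ^ (l - i)) =
      Tval (fun t => (b (i + t)).toNat) (m + n) := by rw [gen_sum, e1]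
  have sa2 : (∑ l ∈ Finset.Icc (k+1) j, (a l).toNat * 2 ^ (l - (k+1))) =
      Tval (fun t => (a (k + 1 + t)).toNat) n := by rw [gen_sum, e6]
  have sb2 : (∑ l ∈ Finset.Icc (k+1) j, (b l).toNat * 2 ^ (l - (k+1))) =
      Tval (fun t => (b (k + 1 + t)).toNat) n := by rw [gen_sum, e6]
  have sa3 : (∑ l ∈ Finset.Icc i k, (a l).toNat * 2 ^ (l - i)) =
      Tval (fun t => (a (i + t)).toNat) m := by rw [gen_sum]
  have sb3 : (∑ l ∈ Finset.Icc i k, (b l).toNat * 2 ^ (l - i)) =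
      Tval (fun t => (b (i + t)).toNat) m := by rw [gen_sum]
  have tot : Tval (fun t => (a (i + t)).toNat) (m + n) +
      Tval (fun t => (b (i + t)).toNat) (m + n) = Tval c (m + n) := (Tval_add _ _ _).symm
  have lo : Tval (fun t => (a (i + t)).toNat) m +
      Tval (fun t => (b (i + t)).toNat) m = Tval c m := (Tval_add _ _ _).symm
  have hi : Tval (fun t => (a (k + 1 + t)).toNat) n +
      Tval (fun t => (b (k + 1 + t)).toNat) n = Tval c' n := (Tval_add _ _ _).symm
  have split : Tval c (m + n) = Tval c m + 2 ^ m * Tval c' n := by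
    rw [Tval_split, hshift]
  -- propagate characterization
  have prop_iff : (∀ l ∈ Finset.Icc (k+1) j, xor (a l) (b l) = true) ↔
      Tval c' n + 1 = 2 ^ n := by
    rw [Tval_max c' hc'le n]
    constructor
    · intro h t ht
      have := h (k + 1 + t) (by simp only [Finset.mem_Icc]; omega)
      simp only [hc']
      revert this
      cases a (k + 1 + t) <;> cases b (k + 1 + t) <;> simp
    · intro h l hl
      simp only [Finset.mem_Icc] at hl
      have := h (l - (k + 1)) (by omega)
      have hlk : k + 1 + (l - (k + 1)) = l := by omega
      simp only [hc', hlk] at this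
      revert this
      cases a l <;> cases b l <;> simp
  -- put everything together
  rw [generate, generate, generate, propagate, sa, sb, sa2, sb2, sa3, sb3,
    ← Bool.decide_and, ← Bool.decide_or]
  apply decide_eq_decide.mpr
  rw [e2, e3, e5, tot, lo, hi, split, prop_iff]
  have hLb := Tval_le c hcle m
  have hHb := Tval_le c' hc'le n
  have hMpos : 0 < 2 ^ m := Nat.pow_pos (by norm_num)
  have h2m : 2 ^ (m + 1) = 2 * 2 ^ m := by ring
  have h2n : 2 ^ (n + 1) = 2 * 2 ^ n := by ring
  have := key_arith (2 ^ m) (2 ^ n) (Tval c m) (Tval c' n) hMpos (by omega) (by omega)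
  rw [pow_add]
  exact this.trans (by tauto)
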